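/- arXiv:1906.03707 — 4 statements merged into one kernel-verified Lean document; each statement's English description precedes it below -/
import Mathlib

section
/- Suppose f is a monotone submodular function on a finite ground set, A ⊆ B, |B \ A| ≤ k, and a* maximizes the marginal gain f(A ∪ {a}) - f(A) over all elements a of the ground set not in A. Then f(A ∪ {a*}) - f(A) ≥ (f(B) - f(A)) / k. -/
/-- The best marginal gain over elements outside `A` is at least
`(f B - f A) / k` when `|B \ A| ≤ k`, for monotone submodular `f`. -/
theorem greedy_marginal_gain {U : Type*} [Fintype U] [DecidableEq U]
    (f : Finset U → ℝ)
    (hmono : ∀ A B : Finset U, A ⊆ B → f A ≤ f B)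
    (hsub : ∀ (A B : Finset U), A ⊆ B → ∀ x ∉ B,
      f (insert x B) - f B ≤ f (insert x A) - f A)
    (A B : Finset U) (hAB : A ⊆ B) (k : ℕ) (hk : 1 ≤ k)
    (hcard : (B \ A).card ≤ k)
    (a : U) (ha : a ∉ A)
    (hbest : ∀ b ∉ A, f (insert b A) - f A ≤ f (insert a A) - f A) :
    (f B - f A) / k ≤ f (insert a A) - f A := by
  set g := f (insert a A) - f A with hg
  have hg0 : 0 ≤ g := by
    have := hmono A (insert a A) (Finset.subset_insert _ _)
    linarith
  have key : ∀ S : Finset U, S ⊆ B \ A → f (A ∪ S) - f A ≤ S.card * g := by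
    intro S
    induction S using Finset.induction_on with
    | empty => simp
    | @insert x S hxS ih =>
      intro hsub'
      have hxBA : x ∈ B \ A := hsub' (Finset.mem_insert_self _ _)
      have hxA : x ∉ A := (Finset.mem_sdiff.mp hxBA).2
      have hS : S ⊆ B \ A := fun y hy => hsub' (Finset.mem_insert_of_mem hy)
      have hxAS : x ∉ A ∪ S := by
        simp [Finset.mem_union, hxA, hxS]
      have h1 : f (insert x (A ∪ S)) - f (A ∪ S) ≤ f (insert x A) - f A :=
        hsub A (A ∪ S) (Finset.subset_union_left) x hxAS
      have h2 : f (insert x A) - f A ≤ g := hbest x hxA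
      have h3 : A ∪ insert x S = insert x (A ∪ S) := by
        ext y; simp [Finset.mem_union, Finset.mem_insert]
      have h4 := ih hS
      rw [h3, Finset.card_insert_of_notMem hxS]
      push_cast
      linarith
  have hB : A ∪ (B \ A) = B := Finset.union_sdiff_of_subset hAB
  have hmain : f B - f A ≤ (B \ A).card * g := by
    have := key (B \ A) (le_refl _)
    rwa [hB] at this
  have hk0 : (0:ℝ) < k := by exact_mod_cast hk
  rw [div_le_iff₀ hk0]
  have hcard' : ((B \ A).card : ℝ) ≤ k := by exact_mod_cast hcard
  nlinarith [mul_le_mul_of_nonneg_right hcard' hg0]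
end

section
/- Let Aggregate be a commutative and associative binary operation on a type H, extended to nonempty finite multisets. For a HAG Ĝ (finite DAG over V ∪ V_A) define cover(v) = {v} if v has no in-neighbors, and cover(v) = ∪_{u ∈ N̂_v} cover(u) otherwise. If the covers of the in-neighbors of every node are pairwise disjoint, then aggr(v) = Aggregate({h_u : u ∈ cover(v)}) for every node v, where aggr(v) = h_v on sources and aggr(v) = Aggregate({aggr(u) : u ∈ N̂_v}) otherwise. -/
/-- If the covers of the in-neighbors of every node are pairwise disjoint, then the
hierarchical aggregation `aggr v` equals the flat aggregation of the base values over
`cover v`. Aggregation is the product in a commutative monoid `H`. -/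
theorem hag_aggr_eq_cover_aggregate {V : Type*} [Fintype V] [DecidableEq V]
    {H : Type*} [CommMonoid H]
    (N : V → Finset V) (h : V → H)
    (hwf : WellFounded (fun u v : V => u ∈ N v))
    (aggr : V → H)
    (haggr_src : ∀ v : V, N v = ∅ → aggr v = h v)
    (haggr : ∀ v : V, N v ≠ ∅ → aggr v = ∏ u ∈ N v, aggr u)
    (cover : V → Finset V)
    (hcover_src : ∀ v : V, N v = ∅ → cover v = {v})
    (hcover : ∀ v : V, N v ≠ ∅ → cover v = (N v).biUnion cover)
    (hdisj : ∀ v : V, ∀ u₁ ∈ N v, ∀ u₂ ∈ N v, u₁ ≠ u₂ → Disjoint (cover u₁) (cover u₂)) :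
    ∀ v : V, aggr v = ∏ u ∈ cover v, h u := by
  intro v
  induction v using hwf.induction with
  | _ v ih =>
    by_cases hv : N v = ∅
    · rw [haggr_src v hv, hcover_src v hv, Finset.prod_singleton]
    · rw [haggr v hv, hcover v hv,
        Finset.prod_biUnion (fun u₁ h₁ u₂ h₂ hne => hdisj v u₁ h₁ u₂ h₂ hne)]
      exact Finset.prod_congr rfl fun u hu => ih u hu
end

section
/- A GNN-graph G and a HAG Ĝ produce the same aggregated values a_v for all v ∈ V if cover(v) = N(v) for all v ∈ V, where N(v) is v's neighbor set in G, Aggregate is commutative and associative, and covers of in-neighbors are pairwise disjoint. That is, Aggregate({h_u : u ∈ N(v)}) equals the value computed by the HAG's hierarchical aggregation at v. -/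
/-- Equivalence of a GNN-graph and a HAG: if `cover` of the in-neighbors used to
compute node `v` equals `v`'s neighbor set `Nbr v` in the GNN-graph (and covers are
pairwise disjoint, aggregation being a commutative monoid product), then the HAG's
hierarchically computed aggregated value at `v` equals the flat aggregation
`∏ u ∈ Nbr v, h u`. -/
theorem hag_equivalent_same_output {V A : Type*} [Fintype V] [DecidableEq V]
    [Fintype A] [DecidableEq A] {H : Type*} [CommMonoid H]
    (Nbr : V → Finset V)                       -- neighbor sets in the GNN-graph G
    (Nhat : V ⊕ A → Finset (V ⊕ A))            -- in-neighbor sets in the HAG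
    (hwf : WellFounded (fun u w : V ⊕ A => u ∈ Nhat w))
    (hsrc : ∀ v : V, Nhat (Sum.inl v) = ∅)     -- original nodes are sources
    (hagg : ∀ a : A, Nhat (Sum.inr a) ≠ ∅)     -- aggregation nodes are not sources
    (h : V → H)                                -- previous-layer activations
    (hhat : V ⊕ A → H)                         -- values computed by the HAG
    (hhat_src : ∀ v : V, hhat (Sum.inl v) = h v)
    (hhat_agg : ∀ a : A, hhat (Sum.inr a) = ∏ u ∈ Nhat (Sum.inr a), hhat u)
    (cover : V ⊕ A → Finset V)
    (hcover_src : ∀ v : V, cover (Sum.inl v) = {v})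
    (hcover_agg : ∀ a : A, cover (Sum.inr a) = (Nhat (Sum.inr a)).biUnion cover)
    (hdisj : ∀ w : V ⊕ A, ∀ u₁ ∈ Nhat w, ∀ u₂ ∈ Nhat w, u₁ ≠ u₂ →
      Disjoint (cover u₁) (cover u₂))
    (outIn : V → Finset (V ⊕ A))               -- in-neighbors used to compute a_v
    (hout_disj : ∀ v : V, ∀ u₁ ∈ outIn v, ∀ u₂ ∈ outIn v, u₁ ≠ u₂ →
      Disjoint (cover u₁) (cover u₂))
    (hcov_eq : ∀ v : V, (outIn v).biUnion cover = Nbr v) :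
    ∀ v : V, ∏ u ∈ outIn v, hhat u = ∏ x ∈ Nbr v, h x := by
  have key : ∀ w : V ⊕ A, hhat w = ∏ x ∈ cover w, h x := by
    intro w
    induction w using hwf.induction with
    | _ w ih =>
      cases w with
      | inl v => simp [hhat_src, hcover_src]
      | inr a =>
        rw [hhat_agg, hcover_agg, Finset.prod_biUnion (hdisj _)]
        exact Finset.prod_congr rfl fun u hu => ih u hu
  intro v
  rw [← hcov_eq v, Finset.prod_biUnion (hout_disj v)]
  exact Finset.prod_congr rfl fun u _ => key u
end

section
/- Each iteration of the HAG search algorithm that merges a binary aggregation pair (v₁, v₂) with redundancy r ≥ 2 strictly decreases the cost function: it adds one aggregation node and two edges while removing 2r edges and adding r edges, so the quantity |Ê| - |V_A| decreases by exactly r - 1 ≥ 1. -/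
/-- One iteration of the HAG search algorithm: merging a pair `(v₁, v₂)` with
redundancy `r ≥ 2` by introducing a fresh aggregation node `w` decreases the
quantity `|Ê| - |V_A|` (hence the cost) by exactly `r - 1 ≥ 1`. -/
theorem hag_merge_decreases_cost {W : Type*} [Fintype W] [DecidableEq W]
    (VA : Finset W) (E : Finset (W × W)) (v₁ v₂ w : W)
    (hne : v₁ ≠ v₂)
    (hwfresh : ∀ u : W, (w, u) ∉ E ∧ (u, w) ∉ E)
    (hwVA : w ∉ VA) (hwv₁ : w ≠ v₁) (hwv₂ : w ≠ v₂)
    (R : Finset W) (hR : R = Finset.univ.filter (fun u => (v₁, u) ∈ E ∧ (v₂, u) ∈ E))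
    (r : ℕ) (hr : r = R.card) (hr2 : 2 ≤ r)
    (E' : Finset (W × W))
    (hE' : E' = (E \ (R.image (fun u => (v₁, u)) ∪ R.image (fun u => (v₂, u))))
      ∪ ({(v₁, w), (v₂, w)} ∪ R.image (fun u => (w, u)))) :
    (E'.card : ℤ) - (insert w VA).card = (E.card : ℤ) - VA.card - (r - 1) ∧
    (1 : ℤ) ≤ r - 1 := by
  set A : Finset (W × W) := R.image (fun u => (v₁, u)) with hA
  set B : Finset (W × W) := R.image (fun u => (v₂, u)) with hB
  set C : Finset (W × W) := R.image (fun u => (w, u)) with hC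
  have hAcard : A.card = r := by
    rw [hr, hA, Finset.card_image_of_injective _ (fun a b h => by simpa using h)]
  have hBcard : B.card = r := by
    rw [hr, hB, Finset.card_image_of_injective _ (fun a b h => by simpa using h)]
  have hCcard : C.card = r := by
    rw [hr, hC, Finset.card_image_of_injective _ (fun a b h => by simpa using h)]
  have hAB : Disjoint A B := by
    rw [Finset.disjoint_left]
    rintro ⟨x, y⟩ hx hy
    simp only [hA, hB, Finset.mem_image] at hx hy
    obtain ⟨a, -, ha⟩ := hx
    obtain ⟨b, -, hb⟩ := hy
    rw [Prod.ext_iff] at ha hb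
    exact hne (ha.1.trans hb.1.symm)
  have hsub : A ∪ B ⊆ E := by
    rintro ⟨x, y⟩ hx
    simp only [hA, hB, Finset.mem_union, Finset.mem_image] at hx
    rcases hx with ⟨a, ha, heq⟩ | ⟨a, ha, heq⟩ <;>
    · rw [hR, Finset.mem_filter] at ha
      rw [← heq]; tauto
  have hABcard : (A ∪ B).card = 2 * r := by
    rw [Finset.card_union_of_disjoint hAB, hAcard, hBcard]; ring
  have hsd : (E \ (A ∪ B)).card = E.card - 2 * r := by
    rw [Finset.card_sdiff_of_subset hsub, hABcard]
  set N : Finset (W × W) := {(v₁, w), (v₂, w)} ∪ C with hN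
  have hNE : ∀ p ∈ N, p ∉ E := by
    intro p hp
    obtain ⟨x, y⟩ := p
    simp only [hN, hC, Finset.mem_union, Finset.mem_insert, Finset.mem_singleton,
      Finset.mem_image, Prod.mk.injEq] at hp
    rcases hp with (⟨hx, hy⟩ | ⟨hx, hy⟩) | ⟨a, -, hx, hy⟩
    · rw [hx, hy]; exact (hwfresh v₁).2
    · rw [hx, hy]; exact (hwfresh v₂).2
    · rw [← hx, ← hy]; exact (hwfresh a).1
  have hdisjEN : Disjoint (E \ (A ∪ B)) N := by
    rw [Finset.disjoint_right]
    intro p hp hq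
    exact hNE p hp (Finset.mem_sdiff.mp hq).1
  have hNcard : N.card = 2 + r := by
    have hpairC : Disjoint ({(v₁, w), (v₂, w)} : Finset (W × W)) C := by
      rw [Finset.disjoint_left]
      intro p hx hy
      obtain ⟨x, y⟩ := p
      simp only [hC, Finset.mem_insert, Finset.mem_singleton, Finset.mem_image,
        Prod.mk.injEq] at hx hy
      obtain ⟨a, -, hx', -⟩ := hy
      rcases hx with ⟨h1, -⟩ | ⟨h1, -⟩
      · exact hwv₁ (hx'.trans h1)
      · exact hwv₂ (hx'.trans h1)
    rw [hN, Finset.card_union_of_disjoint hpairC, hCcard]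
    congr 1
    rw [Finset.card_insert_of_notMem (by simp [hne]), Finset.card_singleton]
  have hE'card : E'.card = (E.card - 2 * r) + (2 + r) := by
    rw [hE', Finset.card_union_of_disjoint hdisjEN, hsd, hNcard]
  have h2r : 2 * r ≤ E.card := by
    calc 2 * r = (A ∪ B).card := hABcard.symm
    _ ≤ E.card := Finset.card_le_card hsub
  have hVA : (insert w VA).card = VA.card + 1 := Finset.card_insert_of_notMem hwVA
  constructor
  · rw [hE'card, hVA]
    push_cast [h2r]
    ring
  · have : (2 : ℤ) ≤ r := by exact_mod_cast hr2
    linarith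
end
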